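/- Let r > 0 be real. The set Λ = {2·(a₀·𝟏 + a₁·𝐢 + a₂·𝐣 + a₃·𝐤)·v : a₀, a₁, a₂, a₃ ∈ ℤ with a₀ + a₁ + a₂ + a₃ even} is a lattice in ℂ²: it is an additive subgroup of ℂ², it is a discrete subset of ℂ², and it spans ℂ² as a real vector space (so it is a discrete abelian subgroup of rank 4). -/

import Mathlib

open Matrix Complex

/-- The quaternionic `2×2` matrices `𝟏, 𝐢, 𝐣, 𝐤`. -/
noncomputable def q1 : Matrix (Fin 2) (Fin 2) ℂ := !![1, 0; 0, 1]
noncomputable def qi : Matrix (Fin 2) (Fin 2) ℂ := !![0, 1; -1, 0]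
noncomputable def qj : Matrix (Fin 2) (Fin 2) ℂ := !![0, -Complex.I; -Complex.I, 0]
noncomputable def qk : Matrix (Fin 2) (Fin 2) ℂ := !![-Complex.I, 0; 0, Complex.I]

/-- The vector `v = (0, r) ∈ ℂ²`. -/
noncomputable def vvec (r : ℝ) : Fin 2 → ℂ := ![0, (r : ℂ)]

/-- The set `Λ = {2(a₀𝟏 + a₁𝐢 + a₂𝐣 + a₃𝐤)v : aᵢ ∈ ℤ, a₀+a₁+a₂+a₃ even}`. -/
def Λset (r : ℝ) : Set (Fin 2 → ℂ) :=
  {x | ∃ a₀ a₁ a₂ a₃ : ℤ, Even (a₀ + a₁ + a₂ + a₃) ∧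
    x = (2:ℂ) • ((a₀ • q1 + a₁ • qi + a₂ • qj + a₃ • qk) *ᵥ vvec r)}

lemma lam_eq (r : ℝ) (a₀ a₁ a₂ a₃ : ℤ) :
    (2:ℂ) • ((a₀ • q1 + a₁ • qi + a₂ • qj + a₃ • qk) *ᵥ vvec r)
      = ![(2*r:ℂ)*((a₁:ℂ) + ((-a₂ : ℤ):ℂ)*Complex.I),
          (2*r:ℂ)*((a₀:ℂ) + ((a₃ : ℤ):ℂ)*Complex.I)] := by
  funext i
  fin_cases i <;>
    simp [q1, qi, qj, qk, vvec, Matrix.mulVec, dotProduct, Fin.sum_univ_two,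
      Matrix.smul_apply, zsmul_eq_mul] <;> push_cast <;> ring

lemma key (r : ℝ) (hr : 0 < r) (m n : ℤ)
    (h : ‖(2*r:ℂ)*((m:ℂ) + (n:ℂ)*Complex.I)‖ < r) :
    (m:ℂ) + (n:ℂ)*Complex.I = 0 := by
  by_contra hz
  have hmn : m ≠ 0 ∨ n ≠ 0 := by
    by_contra hc; push_neg at hc; exact hz (by simp [hc.1, hc.2])
  have h1 : (1:ℝ) ≤ (m:ℝ)^2 + (n:ℝ)^2 := by
    have : (1:ℤ) ≤ m^2 + n^2 := by
      rcases hmn with hm | hm <;>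
        rcases lt_or_gt_of_ne hm with h' | h' <;> nlinarith [sq_nonneg m, sq_nonneg n]
    exact_mod_cast this
  have habs : (1:ℝ) ≤ ‖(m:ℂ) + (n:ℂ)*Complex.I‖ := by
    have : ((m:ℂ) + (n:ℂ)*Complex.I) = ((m:ℝ):ℂ) + ((n:ℝ):ℂ)*Complex.I := by push_cast; ring
    rw [this, Complex.norm_def, Complex.normSq_add_mul_I]
    exact Real.one_le_sqrt.mpr h1
  have h2 : ‖(2*r:ℂ)*((m:ℂ) + (n:ℂ)*Complex.I)‖
      = (2*r) * ‖(m:ℂ) + (n:ℂ)*Complex.I‖ := by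
    rw [norm_mul]
    congr 1
    rw [show ((2*r : ℂ)) = (((2*r:ℝ)):ℂ) by push_cast; ring, Complex.norm_real, Real.norm_eq_abs,
      abs_of_pos (by linarith)]
  rw [h2] at h
  nlinarith

lemma close_eq (r : ℝ) (hr : 0 < r) (m n m' n' : ℤ)
    (h : dist ((2*r:ℂ)*((m:ℂ) + (n:ℂ)*Complex.I)) ((2*r:ℂ)*((m':ℂ) + (n':ℂ)*Complex.I)) < r) :
    (2*r:ℂ)*((m:ℂ) + (n:ℂ)*Complex.I) = (2*r:ℂ)*((m':ℂ) + (n':ℂ)*Complex.I) := by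
  rw [Complex.dist_eq] at h
  have e : (2*r:ℂ)*((m:ℂ) + (n:ℂ)*Complex.I) - (2*r:ℂ)*((m':ℂ) + (n':ℂ)*Complex.I)
      = (2*r:ℂ)*((↑(m-m'):ℂ) + (↑(n-n'):ℂ)*Complex.I) := by push_cast; ring
  rw [e] at h
  have h0 := key r hr (m-m') (n-n') h
  have : (2*r:ℂ)*((m:ℂ) + (n:ℂ)*Complex.I) - (2*r:ℂ)*((m':ℂ) + (n':ℂ)*Complex.I) = 0 := by
    rw [e, h0]; ring
  exact sub_eq_zero.mp this

lemma mem_lambda (r : ℝ) (a₀ a₁ a₂ a₃ : ℤ) (h : Even (a₀ + a₁ + a₂ + a₃)) :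
    ![(2*r:ℂ)*((a₁:ℂ) + ((-a₂ : ℤ):ℂ)*Complex.I),
      (2*r:ℂ)*((a₀:ℂ) + ((a₃ : ℤ):ℂ)*Complex.I)] ∈ Λset r :=
  ⟨a₀, a₁, a₂, a₃, h, (lam_eq r a₀ a₁ a₂ a₃).symm⟩

noncomputable def ΛS (r : ℝ) : AddSubgroup (Fin 2 → ℂ) where
  carrier := Λset r
  zero_mem' := by
    refine ⟨0, 0, 0, 0, by simp, ?_⟩
    rw [lam_eq]; funext i; fin_cases i <;> simp
  add_mem' := by
    rintro x y ⟨a₀, a₁, a₂, a₃, ha, rfl⟩ ⟨b₀, b₁, b₂, b₃, hb, rfl⟩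
    refine ⟨a₀+b₀, a₁+b₁, a₂+b₂, a₃+b₃, ?_, ?_⟩
    · simp only [Int.even_iff] at ha hb ⊢; omega
    · rw [lam_eq, lam_eq, lam_eq]; funext i
      fin_cases i <;> simp <;> push_cast <;> ring
  neg_mem' := by
    rintro x ⟨a₀, a₁, a₂, a₃, ha, rfl⟩
    refine ⟨-a₀, -a₁, -a₂, -a₃, ?_, ?_⟩
    · simp only [Int.even_iff] at ha ⊢; omega
    · rw [lam_eq, lam_eq]; funext i
      fin_cases i <;> simp <;> push_cast <;> ring


/-- For `r > 0`, the set `Λ` is a lattice in `ℂ²`: it is an additive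
subgroup, it is discrete (each point is isolated), and it spans `ℂ²` as a
real vector space. -/
theorem lambda_is_lattice (r : ℝ) (hr : 0 < r) :
    (∃ S : AddSubgroup (Fin 2 → ℂ), (S : Set (Fin 2 → ℂ)) = Λset r)
    ∧ (∀ x ∈ Λset r, ∃ U : Set (Fin 2 → ℂ), IsOpen U ∧ x ∈ U ∧
        ∀ y ∈ Λset r, y ∈ U → y = x)
    ∧ Submodule.span ℝ (Λset r) = ⊤ := by
  refine ⟨⟨ΛS r, rfl⟩, ?_, ?_⟩
  · rintro x ⟨a₀, a₁, a₂, a₃, ha, rfl⟩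
    refine ⟨Metric.ball _ r, Metric.isOpen_ball, Metric.mem_ball_self hr, ?_⟩
    rintro y ⟨b₀, b₁, b₂, b₃, hb, rfl⟩ hy
    rw [Metric.mem_ball] at hy
    simp only [lam_eq] at hy ⊢
    have h0 : dist ((2*r:ℂ)*((b₁:ℂ) + ((-b₂:ℤ):ℂ)*Complex.I))
        ((2*r:ℂ)*((a₁:ℂ) + ((-a₂:ℤ):ℂ)*Complex.I)) < r := by
      calc _ ≤ _ := dist_le_pi_dist _ _ 0
        _ < r := hy
    have h1 : dist ((2*r:ℂ)*((b₀:ℂ) + ((b₃:ℤ):ℂ)*Complex.I))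
        ((2*r:ℂ)*((a₀:ℂ) + ((a₃:ℤ):ℂ)*Complex.I)) < r := by
      calc _ ≤ _ := dist_le_pi_dist _ _ 1
        _ < r := hy
    funext i
    fin_cases i
    · exact close_eq r hr b₁ (-b₂) a₁ (-a₂) h0
    · exact close_eq r hr b₀ b₃ a₀ a₃ h1
  · rw [eq_top_iff]
    rintro x -
    have e1 : ![(2*r:ℂ), (2*r:ℂ)] ∈ Λset r := by
      have := mem_lambda r 1 1 0 0 (by decide)
      simpa using this
    have e2 : ![(2*r:ℂ), -(2*r:ℂ)] ∈ Λset r := by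
      have := mem_lambda r (-1) 1 0 0 (by decide)
      convert this using 2 <;> push_cast <;> ring
    have e3 : ![-(2*r:ℂ)*Complex.I, (2*r:ℂ)*Complex.I] ∈ Λset r := by
      have := mem_lambda r 0 0 1 1 (by decide)
      convert this using 2 <;> push_cast <;> ring
    have e4 : ![(2*r:ℂ)*Complex.I, (2*r:ℂ)*Complex.I] ∈ Λset r := by
      have := mem_lambda r 0 0 (-1) 1 (by decide)
      convert this using 2 <;> push_cast <;> ring
    have hs := Submodule.subset_span (R := ℝ) (s := Λset r)
    have m1 := hs e1; have m2 := hs e2; have m3 := hs e3; have m4 := hs e4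
    set S := Submodule.span ℝ (Λset r)
    have hrne : (r:ℂ) ≠ 0 := by exact_mod_cast hr.ne'
    have hb1 : ![(1:ℂ), 0] ∈ S := by
      have h := S.smul_mem ((4*r)⁻¹ : ℝ) (S.add_mem m1 m2)
      convert h using 1
      funext i; fin_cases i <;>
        (simp [Complex.real_smul] <;> field_simp [hrne] <;> ring)
    have hb2 : ![(0:ℂ), 1] ∈ S := by
      have h := S.smul_mem ((4*r)⁻¹ : ℝ) (S.sub_mem m1 m2)
      convert h using 1
      funext i; fin_cases i <;>
        (simp [Complex.real_smul] <;> field_simp [hrne] <;> ring)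
    have hb3 : ![Complex.I, 0] ∈ S := by
      have h := S.smul_mem ((4*r)⁻¹ : ℝ) (S.sub_mem m4 m3)
      convert h using 1
      funext i; fin_cases i <;>
        (simp [Complex.real_smul] <;> field_simp [hrne] <;> ring)
    have hb4 : ![(0:ℂ), Complex.I] ∈ S := by
      have h := S.smul_mem ((4*r)⁻¹ : ℝ) (S.add_mem m3 m4)
      convert h using 1
      funext i; fin_cases i <;>
        (simp [Complex.real_smul] <;> field_simp [hrne] <;> ring)
    have hx : x = (x 0).re • ![(1:ℂ), 0] + (x 0).im • ![Complex.I, 0]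
        + (x 1).re • ![(0:ℂ), 1] + (x 1).im • ![(0:ℂ), Complex.I] := by
      funext i; fin_cases i <;> simp [Complex.real_smul] <;>
        (apply Complex.ext <;> simp)
    rw [hx]
    exact S.add_mem (S.add_mem (S.add_mem (S.smul_mem _ hb1) (S.smul_mem _ hb3))
      (S.smul_mem _ hb2)) (S.smul_mem _ hb4)
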